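/- Let G(q,p) = p·sin q and L = (1/2)p² + (c₁ + c₂ cos q)/sin² q on the domain sin q ≠ 0. Then X_L²(G) = -2L·G, where X_L(F) = p ∂_q F - V'(q) ∂_p F with V(q) = (c₁ + c₂ cos q)/sin² q. (This verifies equation X_L²(G) = -2(cL + L₀)G with c = 1, L₀ = 0 for the TTW building block.) -/

import Mathlib

open Real

/-- Hamiltonian vector field of L = p²/2 + V(q): X_L(F) = p ∂_q F - V'(q) ∂_p F. -/
noncomputable def XL (V : ℝ → ℝ) (F : ℝ → ℝ → ℝ) : ℝ → ℝ → ℝ :=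
  fun q p => p * deriv (fun x => F x p) q - deriv V q * deriv (F q) p

theorem ttw_building_block_eigenfunction (c₁ c₂ : ℝ) :
    ∀ q p : ℝ, Real.sin q ≠ 0 →
      XL (fun q' => (c₁ + c₂ * Real.cos q') / (Real.sin q')^2)
        (XL (fun q' => (c₁ + c₂ * Real.cos q') / (Real.sin q')^2)
          (fun q' p' => p' * Real.sin q')) q p
      = -2 * ((1/2) * p^2 + (c₁ + c₂ * Real.cos q) / (Real.sin q)^2) * (p * Real.sin q) := by
  intro q p hq
  set V : ℝ → ℝ := fun q' => (c₁ + c₂ * Real.cos q') / (Real.sin q')^2 with hVdef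
  -- explicit derivative of V at points where sin ≠ 0
  have hV : ∀ x : ℝ, Real.sin x ≠ 0 → HasDerivAt V
      (((-(c₂ * Real.sin x)) * Real.sin x ^ 2 -
        (c₁ + c₂ * Real.cos x) * (2 * Real.sin x ^ 1 * Real.cos x)) / (Real.sin x ^ 2) ^ 2) x := by
    intro x hx
    have hs := Real.hasDerivAt_sin x
    have hc := Real.hasDerivAt_cos x
    have hnum : HasDerivAt (fun y => c₁ + c₂ * Real.cos y) (-(c₂ * Real.sin x)) x := by
      simpa using (hc.const_mul c₂).const_add c₁
    have hden : HasDerivAt (fun y => Real.sin y ^ 2) (2 * Real.sin x ^ 1 * Real.cos x) x :=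
      hs.pow 2
    exact hnum.div hden (pow_ne_zero 2 hx)
  set V₁ : ℝ → ℝ := fun x =>
      ((-(c₂ * Real.sin x)) * Real.sin x ^ 2 -
        (c₁ + c₂ * Real.cos x) * (2 * Real.sin x ^ 1 * Real.cos x)) / (Real.sin x ^ 2) ^ 2
      with hV₁def
  have hopen : IsOpen {x : ℝ | Real.sin x ≠ 0} :=
    isOpen_compl_iff.mpr (isClosed_eq Real.continuous_sin continuous_const)
  have hev : deriv V =ᶠ[nhds q] V₁ := by
    filter_upwards [hopen.mem_nhds hq] with x hx
    exact (hV x hx).deriv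
  -- the inner XL simplifies everywhere
  have hinner : ∀ x p' : ℝ, XL V (fun q' p' => p' * Real.sin q') x p'
      = p' ^ 2 * Real.cos x - deriv V x * Real.sin x := by
    intro x p'
    have h1 : deriv (fun y => p' * Real.sin y) x = p' * Real.cos x :=
      ((Real.hasDerivAt_sin x).const_mul p').deriv
    have h2 : deriv (fun y : ℝ => y * Real.sin x) p' = Real.sin x := by
      simpa using ((hasDerivAt_id p').mul_const (Real.sin x)).deriv
    simp only [XL, h1, h2]; ring
  -- derivative of V₁ at q
  have hs := Real.hasDerivAt_sin q
  have hc := Real.hasDerivAt_cos q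
  have hnum : HasDerivAt (fun y => c₁ + c₂ * Real.cos y) (-(c₂ * Real.sin q)) q := by
    simpa using (hc.const_mul c₂).const_add c₁
  have hN : HasDerivAt (fun x => (-(c₂ * Real.sin x)) * Real.sin x ^ 2 -
      (c₁ + c₂ * Real.cos x) * (2 * Real.sin x ^ 1 * Real.cos x))
      ((-(c₂ * Real.cos q)) * Real.sin q ^ 2 +
        (-(c₂ * Real.sin q)) * (2 * Real.sin q ^ 1 * Real.cos q) -
        ((-(c₂ * Real.sin q)) * (2 * Real.sin q ^ 1 * Real.cos q) +
          (c₁ + c₂ * Real.cos q) *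
            ((2 * (1 * Real.sin q ^ 0 * Real.cos q) * Real.cos q) +
              2 * Real.sin q ^ 1 * (-Real.sin q)))) q := by
    have ha : HasDerivAt (fun x => -(c₂ * Real.sin x)) (-(c₂ * Real.cos q)) q :=
      (hs.const_mul c₂).neg
    have hb : HasDerivAt (fun x => Real.sin x ^ 2) (2 * Real.sin q ^ 1 * Real.cos q) q := hs.pow 2
    have hd : HasDerivAt (fun x => 2 * Real.sin x ^ 1 * Real.cos x)
        ((2 * (1 * Real.sin q ^ 0 * Real.cos q)) * Real.cos q +
          (2 * Real.sin q ^ 1) * (-Real.sin q)) q := by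
      have := ((hs.pow 1).const_mul 2).mul hc
      simpa [Pi.mul_def, mul_comm, mul_assoc, mul_left_comm] using this
    have := (ha.mul hb).sub (hnum.mul hd)
    exact this
  have hD : HasDerivAt (fun x => (Real.sin x ^ 2) ^ 2)
      (2 * (Real.sin q ^ 2) ^ 1 * (2 * Real.sin q ^ 1 * Real.cos q)) q := (hs.pow 2).pow 2
  have hDne : (Real.sin q ^ 2) ^ 2 ≠ 0 := pow_ne_zero 2 (pow_ne_zero 2 hq)
  have hV₁' := hN.div hD hDne
  -- the q-derivative of the inner function
  have houter : deriv (fun x => XL V (fun q' p' => p' * Real.sin q') x p) q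
      = p ^ 2 * (-Real.sin q) -
        (((((-(c₂ * Real.cos q)) * Real.sin q ^ 2 +
        (-(c₂ * Real.sin q)) * (2 * Real.sin q ^ 1 * Real.cos q) -
        ((-(c₂ * Real.sin q)) * (2 * Real.sin q ^ 1 * Real.cos q) +
          (c₁ + c₂ * Real.cos q) *
            ((2 * (1 * Real.sin q ^ 0 * Real.cos q) * Real.cos q) +
              2 * Real.sin q ^ 1 * (-Real.sin q)))) * (Real.sin q ^ 2) ^ 2 -
          (((-(c₂ * Real.sin q)) * Real.sin q ^ 2 -
            (c₁ + c₂ * Real.cos q) * (2 * Real.sin q ^ 1 * Real.cos q)))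
            * (2 * (Real.sin q ^ 2) ^ 1 * (2 * Real.sin q ^ 1 * Real.cos q)))
            / ((Real.sin q ^ 2) ^ 2) ^ 2) * Real.sin q
          + V₁ q * Real.cos q) := by
    have heq : (fun x => XL V (fun q' p' => p' * Real.sin q') x p)
        =ᶠ[nhds q] (fun x => p ^ 2 * Real.cos x - V₁ x * Real.sin x) := by
      filter_upwards [hopen.mem_nhds hq] with x hx
      rw [hinner x p, (hV x hx).deriv]
    rw [heq.deriv_eq]
    exact (((hc.const_mul (p ^ 2)).sub (hV₁'.mul hs)).deriv)
  -- the p-derivative of the inner function at q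
  have hpder : deriv (fun p' => XL V (fun q' p' => p' * Real.sin q') q p') p
      = 2 * p * Real.cos q := by
    have : (fun p' => XL V (fun q' p' => p' * Real.sin q') q p')
        = fun p' => p' ^ 2 * Real.cos q - deriv V q * Real.sin q := by
      funext p'; exact hinner q p'
    rw [this]
    have h1 : HasDerivAt (fun p' : ℝ => p' ^ 2 * Real.cos q - deriv V q * Real.sin q)
        (2 * p ^ 1 * Real.cos q) p := ((hasDerivAt_pow 2 p).mul_const _).sub_const _
    simpa using h1.deriv
  show p * deriv (fun x => XL V (fun q' p' => p' * Real.sin q') x p) q -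
      deriv V q * deriv (fun p' => XL V (fun q' p' => p' * Real.sin q') q p') p = _
  rw [houter, hpder, (hV q hq).deriv]
  simp only [hV₁def]
  have hpy : Real.sin q ^ 2 + Real.cos q ^ 2 = 1 := Real.sin_sq_add_cos_sq q
  field_simp
  ring_nf
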